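/- Let f: ℝ^m → ℝ^m and suppose the forward Euler step preserves the upper bound for component k: for any v ∈ ℝ^m with v_k ≤ M and any step size h with 0 < h ≤ B_FE, we have v_k + h·f_k(v) ≤ M. Consider the multistep iteration u^{n+1} = ∑_{j=1}^{s} (α_j u^{n+1-j} + φ(Δt)·β_j f(u^{n+1-j})) with α_j, β_j ≥ 0, β_j = 0 whenever α_j = 0, ∑_{j=1}^s α_j = 1, and φ(Δt) ≤ C·B_FE where C = min_j α_j/β_j (the minimum over j with β_j > 0). If u_k^0, ..., u_k^{s-1} ≤ M, then u_k^n ≤ M for all n ≥ s and all Δt ≥ 0. -/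

import Mathlib

/-- the SSP-form nonstandard multistep method preserves the upper
bound M in component k, for any step size, provided φ(Δt) ≤ C·B_FE where
C = min_{j : β_j > 0} α_j/β_j (expressed as φΔt ≤ (α j / β j)·B_FE for each such j). -/
theorem multistep_preserves_bound (m s : ℕ) (hs : 1 ≤ s)
    (f : (Fin m → ℝ) → (Fin m → ℝ)) (k : Fin m) (M BFE : ℝ) (hBFE : 0 < BFE)
    (heuler : ∀ v : Fin m → ℝ, v k ≤ M → ∀ h : ℝ, 0 < h → h ≤ BFE →
      v k + h * f v k ≤ M)
    (α β : Fin s → ℝ) (hα : ∀ j, 0 ≤ α j) (hβ : ∀ j, 0 ≤ β j)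
    (hβα : ∀ j, α j = 0 → β j = 0) (hsum : ∑ j, α j = 1)
    (φΔt : ℝ) (hφ0 : 0 ≤ φΔt) (hφ : ∀ j, β j ≠ 0 → φΔt ≤ α j / β j * BFE)
    (u : ℕ → Fin m → ℝ)
    (hrec : ∀ n, s - 1 ≤ n → u (n+1) = fun i =>
      ∑ j, (α j * u (n - j.val) i + φΔt * β j * f (u (n - j.val)) i))
    (hinit : ∀ n < s, u n k ≤ M) :
    ∀ n, s ≤ n → u n k ≤ M := by
  have key : ∀ n, u n k ≤ M := by
    intro n
    induction n using Nat.strong_induction_on with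
    | _ n ih =>
      rcases lt_or_ge n s with hlt | hge
      · exact hinit n hlt
      · obtain ⟨p, rfl⟩ : ∃ p, n = p + 1 := ⟨n - 1, by omega⟩
        have hp : s - 1 ≤ p := by omega
        have := hrec p hp
        have hval : u (p+1) k = ∑ j, (α j * u (p - j.val) k
            + φΔt * β j * f (u (p - j.val)) k) := by rw [this]
        rw [hval]
        have hterm : ∀ j : Fin s,
            α j * u (p - j.val) k + φΔt * β j * f (u (p - j.val)) k ≤ α j * M := by
          intro j
          have hu : u (p - j.val) k ≤ M := ih _ (by omega)
          rcases eq_or_lt_of_le (hβ j) with hb | hb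
          · rw [← hb]
            have := mul_le_mul_of_nonneg_left hu (hα j)
            nlinarith
          · have hα0 : 0 < α j := by
              rcases eq_or_lt_of_le (hα j) with ha | ha
              · exact absurd (hβα j ha.symm) (by positivity)
              · exact ha
            rcases eq_or_lt_of_le hφ0 with hp0 | hp0
            · rw [← hp0]
              have := mul_le_mul_of_nonneg_left hu (hα j)
              nlinarith
            · set h : ℝ := φΔt * β j / α j with hh
              have hhpos : 0 < h := by positivity
              have hhle : h ≤ BFE := by
                have h1 := hφ j (ne_of_gt hb)
                rw [hh, div_le_iff₀ hα0]
                calc φΔt * β j ≤ (α j / β j * BFE) * β j :=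
                      mul_le_mul_of_nonneg_right h1 (le_of_lt hb)
                  _ = BFE * α j := by field_simp
              have he := heuler (u (p - j.val)) hu h hhpos hhle
              have := mul_le_mul_of_nonneg_left he (le_of_lt hα0)
              have hah : α j * h = φΔt * β j := by
                rw [hh]; field_simp
              nlinarith
        calc ∑ j, (α j * u (p - j.val) k + φΔt * β j * f (u (p - j.val)) k)
            ≤ ∑ j, α j * M := Finset.sum_le_sum fun j _ => hterm j
          _ = M := by rw [← Finset.sum_mul, hsum, one_mul]
  exact fun n _ => key n
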